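/- arXiv:2403.18248 — 2 statements merged into one kernel-verified Lean document; each statement's English description precedes it below -/
import Mathlib

section
/- Plug-in regret bound: with p, p̂ : 𝒳 → [0,1], τ ∈ (0,1), δ := sup_x |p(x) − p̂(x)|, X a random variable in 𝒳, define γ(τ, p, R) := E[(1−τ)(1−p(X))] + E[(p(X) − (1−τ)) 1(X ∈ R)] and let R* = {x : p(x) > 1−τ}, R̂ = {x : p̂(x) > 1−τ}. Then 0 ≤ γ(τ, p, R*) − γ(τ, p, R̂) ≤ δ · P(1−τ − δ ≤ p(X) ≤ 1−τ + δ). -/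
open MeasureTheory

/-- Plug-in regret bound: `0 ≤ γ(τ,p,R*) − γ(τ,p,R̂) ≤ δ · P(1−τ−δ ≤ p(X) ≤ 1−τ+δ)`
where `R* = {p > 1−τ}`, `R̂ = {p̂ > 1−τ}` and `δ = sup_x |p(x) − p̂(x)|`. -/
theorem plugin_regret_bound
    {𝒳 Ω : Type*} [MeasurableSpace 𝒳] [MeasurableSpace Ω]
    (μ : Measure Ω) [IsProbabilityMeasure μ] (X : Ω → 𝒳) (hX : Measurable X)
    (p phat : 𝒳 → ℝ) (hp : Measurable p) (hphat : Measurable phat)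
    (hp01 : ∀ x, p x ∈ Set.Icc (0 : ℝ) 1) (hphat01 : ∀ x, phat x ∈ Set.Icc (0 : ℝ) 1)
    (τ : ℝ) (hτ : τ ∈ Set.Ioo (0 : ℝ) 1)
    (δ : ℝ) (hδ : δ = ⨆ x, |p x - phat x|)
    (hbdd : BddAbove (Set.range fun x => |p x - phat x|))
    (γ : Set 𝒳 → ℝ)
    (hγ : ∀ R : Set 𝒳, γ R = (∫ ω, (1 - τ) * (1 - p (X ω)) ∂μ)
        + ∫ ω, (p (X ω) - (1 - τ)) * Set.indicator R (fun _ => (1 : ℝ)) (X ω) ∂μ) :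
    0 ≤ γ {x | p x > 1 - τ} - γ {x | phat x > 1 - τ} ∧
    γ {x | p x > 1 - τ} - γ {x | phat x > 1 - τ} ≤
      δ * (μ {ω | 1 - τ - δ ≤ p (X ω) ∧ p (X ω) ≤ 1 - τ + δ}).toReal := by
  obtain ⟨hτ0, hτ1⟩ := hτ
  have hδ0 : 0 ≤ δ := hδ ▸ Real.iSup_nonneg (fun x => abs_nonneg _)
  have hδx : ∀ x, |p x - phat x| ≤ δ := fun x => hδ ▸ le_ciSup hbdd x
  set R1 : Set 𝒳 := {x | p x > 1 - τ} with hR1def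
  set R2 : Set 𝒳 := {x | phat x > 1 - τ} with hR2def
  have hR1 : MeasurableSet R1 := measurableSet_lt measurable_const hp
  have hR2 : MeasurableSet R2 := measurableSet_lt measurable_const hphat
  set S : Set Ω := {ω | 1 - τ - δ ≤ p (X ω) ∧ p (X ω) ≤ 1 - τ + δ} with hSdef
  have hS : MeasurableSet S := by
    have : S = (p ∘ X) ⁻¹' Set.Icc (1 - τ - δ) (1 - τ + δ) := rfl
    rw [this]; exact (hp.comp hX) measurableSet_Icc
  set g1 : Ω → ℝ := fun ω => (p (X ω) - (1 - τ)) * Set.indicator R1 (fun _ => (1 : ℝ)) (X ω)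
    with hg1
  set g2 : Ω → ℝ := fun ω => (p (X ω) - (1 - τ)) * Set.indicator R2 (fun _ => (1 : ℝ)) (X ω)
    with hg2
  have hint : ∀ (R : Set 𝒳), MeasurableSet R →
      Integrable (fun ω => (p (X ω) - (1 - τ)) * Set.indicator R (fun _ => (1 : ℝ)) (X ω)) μ := by
    intro R hR
    have hm : Measurable fun ω => (p (X ω) - (1 - τ)) *
        Set.indicator R (fun _ => (1 : ℝ)) (X ω) :=
      ((hp.comp hX).sub measurable_const).mul ((measurable_const.indicator hR).comp hX)
    refine ⟨hm.aestronglyMeasurable, ?_⟩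
    apply HasFiniteIntegral.of_bounded (C := 2)
    filter_upwards with ω
    have h1 := hp01 (X ω)
    obtain ⟨h1a, h1b⟩ := h1
    have h2 : |Set.indicator R (fun _ => (1 : ℝ)) (X ω)| ≤ 1 := by
      by_cases h : X ω ∈ R <;> simp [h]
    have h3 : |p (X ω) - (1 - τ)| ≤ 2 := by
      rw [abs_le]; constructor <;> linarith
    calc ‖(p (X ω) - (1 - τ)) * Set.indicator R (fun _ => (1 : ℝ)) (X ω)‖
        = |p (X ω) - (1 - τ)| * |Set.indicator R (fun _ => (1 : ℝ)) (X ω)| := abs_mul _ _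
      _ ≤ 2 * 1 := by
          exact mul_le_mul h3 h2 (abs_nonneg _) (by norm_num)
      _ = 2 := by norm_num
  have hint1 : Integrable g1 μ := hint R1 hR1
  have hint2 : Integrable g2 μ := hint R2 hR2
  have key : ∀ ω, 0 ≤ g1 ω - g2 ω ∧ g1 ω - g2 ω ≤ S.indicator (fun _ => δ) ω := by
    intro ω
    have hind : 0 ≤ S.indicator (fun _ : Ω => δ) ω :=
      Set.indicator_nonneg (fun _ _ => hδ0) ω
    have habs := hδx (X ω)
    rw [abs_le] at habs
    obtain ⟨ha1, ha2⟩ := habs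
    have e1 : g1 ω = (p (X ω) - (1 - τ)) * (if X ω ∈ R1 then (1 : ℝ) else 0) := by
      simp only [hg1, Set.indicator_apply]
    have e2 : g2 ω = (p (X ω) - (1 - τ)) * (if X ω ∈ R2 then (1 : ℝ) else 0) := by
      simp only [hg2, Set.indicator_apply]
    rw [e1, e2]
    by_cases h1 : X ω ∈ R1 <;> by_cases h2 : X ω ∈ R2 <;>
      simp only [h1, h2, if_true, if_pos, if_neg, not_false_iff, mul_one, mul_zero,
        sub_self, sub_zero, zero_sub, if_false]
    · exact ⟨le_refl 0, hind⟩
    · have hp1 : p (X ω) > 1 - τ := h1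
      have hp2 : ¬ phat (X ω) > 1 - τ := h2
      push_neg at hp2
      have hmem : ω ∈ S := ⟨by linarith, by linarith⟩
      rw [Set.indicator_of_mem hmem]
      constructor <;> linarith
    · have hp1 : ¬ p (X ω) > 1 - τ := h1
      have hp2 : phat (X ω) > 1 - τ := h2
      push_neg at hp1
      have hmem : ω ∈ S := ⟨by linarith, by linarith⟩
      rw [Set.indicator_of_mem hmem]
      constructor <;> linarith
    · exact ⟨le_refl 0, hind⟩
  have hdiff : γ R1 - γ R2 = ∫ ω, (g1 ω - g2 ω) ∂μ := by
    rw [hγ R1, hγ R2, integral_sub hint1 hint2]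
    ring
  constructor
  · rw [hdiff]
    exact integral_nonneg (fun ω => (key ω).1)
  · rw [hdiff]
    have hintd : Integrable (fun ω => S.indicator (fun _ : Ω => δ) ω) μ :=
      (integrable_const δ).indicator hS
    calc ∫ ω, (g1 ω - g2 ω) ∂μ ≤ ∫ ω, S.indicator (fun _ : Ω => δ) ω ∂μ :=
          integral_mono (hint1.sub hint2) hintd (fun ω => (key ω).2)
      _ = (μ S).toReal • δ := by
          rw [integral_indicator_const δ hS]; rfl
      _ = δ * (μ S).toReal := by rw [smul_eq_mul, mul_comm]
end

section
/- If the distribution of p(X) has density bounded by C in a neighborhood of 1−τ (i.e. P(1−τ − t ≤ p(X) ≤ 1−τ + t) ≤ 2Ct for all small t > 0), and sup_x |p̂(x) − p(x)| ≤ δ, then the plug-in regret satisfies γ(τ, p, R*) − γ(τ, p, R̂) ≤ 2C δ², where R* = {p > 1−τ} and R̂ = {p̂ > 1−τ}. -/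
open MeasureTheory

/-- Quadratic plug-in regret bound under a margin (bounded density) condition:
if `P(1−τ−t ≤ p(X) ≤ 1−τ+t) ≤ 2Ct` for all small `t > 0` and `sup_x |p̂(x)−p(x)| ≤ δ`,
then `γ(τ,p,R*) − γ(τ,p,R̂) ≤ 2Cδ²`. -/
theorem plugin_regret_quadratic_bound
    {𝒳 Ω : Type*} [MeasurableSpace 𝒳] [MeasurableSpace Ω]
    (μ : Measure Ω) [IsProbabilityMeasure μ] (X : Ω → 𝒳) (hX : Measurable X)
    (p phat : 𝒳 → ℝ) (hp : Measurable p) (hphat : Measurable phat)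
    (hp01 : ∀ x, p x ∈ Set.Icc (0 : ℝ) 1) (hphat01 : ∀ x, phat x ∈ Set.Icc (0 : ℝ) 1)
    (τ : ℝ) (hτ : τ ∈ Set.Ioo (0 : ℝ) 1)
    (C δ : ℝ) (hC : 0 < C) (hδ0 : 0 ≤ δ)
    (hdens : ∀ t : ℝ, 0 < t → t ≤ δ →
      (μ {ω | 1 - τ - t ≤ p (X ω) ∧ p (X ω) ≤ 1 - τ + t}).toReal ≤ 2 * C * t)
    (hsup : ∀ x, |phat x - p x| ≤ δ)
    (γ : Set 𝒳 → ℝ)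
    (hγ : ∀ R : Set 𝒳, γ R = (∫ ω, (1 - τ) * (1 - p (X ω)) ∂μ)
        + ∫ ω, (p (X ω) - (1 - τ)) * Set.indicator R (fun _ => (1 : ℝ)) (X ω) ∂μ) :
    γ {x | p x > 1 - τ} - γ {x | phat x > 1 - τ} ≤ 2 * C * δ ^ 2 := by
  have hRstar : MeasurableSet {x | p x > 1 - τ} := measurableSet_lt measurable_const hp
  have hRhat : MeasurableSet {x | phat x > 1 - τ} := measurableSet_lt measurable_const hphat
  have integ : ∀ R : Set 𝒳, MeasurableSet R →
      Integrable (fun ω => (p (X ω) - (1 - τ)) * Set.indicator R (fun _ => (1:ℝ)) (X ω)) μ := by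
    intro R hR
    have hm : Measurable fun ω => (p (X ω) - (1 - τ)) * Set.indicator R (fun _ => (1:ℝ)) (X ω) :=
      ((hp.comp hX).sub measurable_const).mul ((measurable_const.indicator hR).comp hX)
    refine (integrable_const (1:ℝ)).mono' hm.aestronglyMeasurable (ae_of_all _ fun ω => ?_)
    have h1 := hp01 (X ω)
    rw [Real.norm_eq_abs, abs_mul]
    have hi : |Set.indicator R (fun _ => (1:ℝ)) (X ω)| ≤ 1 := by
      by_cases h : X ω ∈ R <;> simp [h]
    have hpa : |p (X ω) - (1 - τ)| ≤ 1 := by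
      rw [abs_le]; constructor <;> [nlinarith [h1.1, hτ.1, hτ.2]; nlinarith [h1.2, hτ.1, hτ.2]]
    calc |p (X ω) - (1 - τ)| * |Set.indicator R (fun _ => (1:ℝ)) (X ω)|
        ≤ 1 * 1 := by
          exact mul_le_mul hpa hi (abs_nonneg _) zero_le_one
      _ = 1 := by ring
  have key : γ {x | p x > 1 - τ} - γ {x | phat x > 1 - τ}
      = ∫ ω, ((p (X ω) - (1 - τ)) * Set.indicator {x | p x > 1 - τ} (fun _ => (1:ℝ)) (X ω)
          - (p (X ω) - (1 - τ)) * Set.indicator {x | phat x > 1 - τ} (fun _ => (1:ℝ)) (X ω)) ∂μ := by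
    rw [hγ, hγ, integral_sub (integ _ hRstar) (integ _ hRhat)]; ring
  have hA : MeasurableSet {ω | 1 - τ - δ ≤ p (X ω) ∧ p (X ω) ≤ 1 - τ + δ} := by
    exact ((measurableSet_le measurable_const (hp.comp hX)).inter
      (measurableSet_le (hp.comp hX) measurable_const))
  have hbound : ∀ ω, (p (X ω) - (1 - τ)) * Set.indicator {x | p x > 1 - τ} (fun _ => (1:ℝ)) (X ω)
      - (p (X ω) - (1 - τ)) * Set.indicator {x | phat x > 1 - τ} (fun _ => (1:ℝ)) (X ω)
      ≤ Set.indicator {ω | 1 - τ - δ ≤ p (X ω) ∧ p (X ω) ≤ 1 - τ + δ} (fun _ => δ) ω := by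
    intro ω
    have hs := hsup (X ω)
    rw [abs_le] at hs
    simp only [Set.indicator_apply, Set.mem_setOf_eq]
    by_cases h1 : p (X ω) > 1 - τ <;> by_cases h2 : phat (X ω) > 1 - τ <;>
        simp only [h1, h2, if_true, if_false, mul_one, mul_zero, sub_zero, zero_sub, sub_self]
    · split_ifs <;> [exact hδ0; exact le_rfl]
    · rw [if_pos ⟨by push_neg at h2; linarith [hs.1], by push_neg at h2; linarith [hs.2]⟩]
      push_neg at h2; linarith [hs.2]
    · rw [if_pos ⟨by push_neg at h1; linarith [hs.1], by push_neg at h1; linarith [hs.2]⟩]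
      push_neg at h1; linarith [hs.1]
    · split_ifs <;> [exact hδ0; exact le_rfl]
  have hineq : γ {x | p x > 1 - τ} - γ {x | phat x > 1 - τ}
      ≤ (μ {ω | 1 - τ - δ ≤ p (X ω) ∧ p (X ω) ≤ 1 - τ + δ}).toReal * δ := by
    rw [key]
    calc ∫ ω, ((p (X ω) - (1 - τ)) * Set.indicator {x | p x > 1 - τ} (fun _ => (1:ℝ)) (X ω)
          - (p (X ω) - (1 - τ)) * Set.indicator {x | phat x > 1 - τ} (fun _ => (1:ℝ)) (X ω)) ∂μ
        ≤ ∫ ω, Set.indicator {ω | 1 - τ - δ ≤ p (X ω) ∧ p (X ω) ≤ 1 - τ + δ} (fun _ => δ) ω ∂μ :=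
          integral_mono ((integ _ hRstar).sub (integ _ hRhat))
            ((integrable_const δ).indicator hA) hbound
      _ = (μ {ω | 1 - τ - δ ≤ p (X ω) ∧ p (X ω) ≤ 1 - τ + δ}).toReal * δ := by
          rw [integral_indicator_const _ hA]; simp [smul_eq_mul, measureReal_def]
  rcases eq_or_lt_of_le hδ0 with hδ | hδ
  · calc γ {x | p x > 1 - τ} - γ {x | phat x > 1 - τ}
        ≤ (μ {ω | 1 - τ - δ ≤ p (X ω) ∧ p (X ω) ≤ 1 - τ + δ}).toReal * δ := hineq
      _ ≤ 2 * C * δ ^ 2 := by rw [← hδ]; simp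
  · calc γ {x | p x > 1 - τ} - γ {x | phat x > 1 - τ}
        ≤ (μ {ω | 1 - τ - δ ≤ p (X ω) ∧ p (X ω) ≤ 1 - τ + δ}).toReal * δ := hineq
      _ ≤ (2 * C * δ) * δ := by
          apply mul_le_mul_of_nonneg_right (hdens δ hδ le_rfl) hδ0
      _ = 2 * C * δ ^ 2 := by ring
end
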